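/- The PVTOL system ÿ¹ = -u¹ sin θ + ε u² cos θ, ÿ² = u¹ cos θ + ε u² sin θ + g, θ̈ = u² is mapped by the transformation z¹ = y¹ - ε sin θ, z² = y² + ε cos θ, v¹ = θ, v² = u¹ - ε θ̇² to the system z̈¹ = -v² sin v¹, z̈² = v² cos v¹ + g: if (y¹, y², θ) solves the PVTOL equations with inputs (u¹, u²), then (z¹, z²) as defined solves the second system with inputs (v¹, v²) as defined. -/

import Mathlib

open Real

/-- Lie-Bäcklund equivalence for the PVTOL: the transformation
`z¹ = y¹ - ε sin θ`, `z² = y² + ε cos θ`, `v¹ = θ`, `v² = u¹ - ε θ̇²`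
maps solutions of the PVTOL equations to solutions of
`z̈¹ = -v² sin v¹`, `z̈² = v² cos v¹ + g`. -/
theorem PVTOL_LieBaecklund_equivalence
    (g ε : ℝ) (y1 y2 θ u1 u2 : ℝ → ℝ)
    (hy1 : Differentiable ℝ y1) (hy1' : Differentiable ℝ (deriv y1))
    (hy2 : Differentiable ℝ y2) (hy2' : Differentiable ℝ (deriv y2))
    (hθ : Differentiable ℝ θ) (hθ' : Differentiable ℝ (deriv θ))
    (heq1 : ∀ t, deriv (deriv y1) t = -(u1 t) * sin (θ t) + ε * u2 t * cos (θ t))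
    (heq2 : ∀ t, deriv (deriv y2) t = u1 t * cos (θ t) + ε * u2 t * sin (θ t) + g)
    (heq3 : ∀ t, deriv (deriv θ) t = u2 t)
    (z1 z2 v1 v2 : ℝ → ℝ)
    (hz1 : z1 = fun t => y1 t - ε * sin (θ t))
    (hz2 : z2 = fun t => y2 t + ε * cos (θ t))
    (hv1 : v1 = θ)
    (hv2 : v2 = fun t => u1 t - ε * (deriv θ t) ^ 2) :
    (∀ t, deriv (deriv z1) t = -(v2 t) * sin (v1 t)) ∧
    (∀ t, deriv (deriv z2) t = v2 t * cos (v1 t) + g) := by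
  have hsin : ∀ t : ℝ, HasDerivAt (fun s => sin (θ s)) (cos (θ t) * deriv θ t) t := by
    intro t
    simpa [Function.comp_def] using (Real.hasDerivAt_sin (θ t)).comp t (hθ t).hasDerivAt
  have hcos : ∀ t : ℝ, HasDerivAt (fun s => cos (θ s)) (-sin (θ t) * deriv θ t) t := by
    intro t
    simpa [Function.comp_def] using (Real.hasDerivAt_cos (θ t)).comp t (hθ t).hasDerivAt
  have hdz1 : deriv z1 = fun t => deriv y1 t - ε * (cos (θ t) * deriv θ t) := by
    funext t
    rw [hz1]
    exact (((hy1 t).hasDerivAt.sub ((hsin t).const_mul ε)).deriv)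
  have hdz2 : deriv z2 = fun t => deriv y2 t + ε * (-sin (θ t) * deriv θ t) := by
    funext t
    rw [hz2]
    exact (((hy2 t).hasDerivAt.add ((hcos t).const_mul ε)).deriv)
  constructor
  · intro t
    rw [hdz1, hv1, hv2]
    have h : HasDerivAt (fun s => deriv y1 s - ε * (cos (θ s) * deriv θ s))
        (deriv (deriv y1) t -
          ε * ((-sin (θ t) * deriv θ t) * deriv θ t + cos (θ t) * deriv (deriv θ) t)) t :=
      (hy1' t).hasDerivAt.sub (((hcos t).mul (hθ' t).hasDerivAt).const_mul ε)
    rw [h.deriv, heq1 t, heq3 t]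
    ring
  · intro t
    rw [hdz2, hv1, hv2]
    have h : HasDerivAt (fun s => deriv y2 s + ε * (-sin (θ s) * deriv θ s))
        (deriv (deriv y2) t +
          ε * ((-(cos (θ t) * deriv θ t) * deriv θ t) + (-sin (θ t)) * deriv (deriv θ) t)) t := by
      have hns : ∀ s : ℝ, HasDerivAt (fun s => -sin (θ s)) (-(cos (θ s) * deriv θ s)) s :=
        fun s => (hsin s).neg
      exact (hy2' t).hasDerivAt.add (((hns t).mul (hθ' t).hasDerivAt).const_mul ε)
    rw [h.deriv, heq2 t, heq3 t]
    ring
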